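/- Let u be a real-valued C² function on an open set containing a closed rectangle Q = [p,q]×[0,s] with (Δ + μ)u = 0 on Q and |u| ≤ M on ∂Q, where 0 < μ < π²(16 + 1/16), q − p ≤ 1/8 and s ≤ 1. If S(x,y) = 8M·cos((π/4)(y − s/2))·cos(4π(x − (p+q)/2)) satisfies S > 0 on Q, then |u| ≤ 8M on Q. -/

import Mathlib

open Real Set Filter Topology

lemma iteratedDeriv_two' (f : ℝ → ℝ) : iteratedDeriv 2 f = deriv (deriv f) := by
  rw [show (2:ℕ) = 1+1 from rfl, iteratedDeriv_succ, iteratedDeriv_one]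

lemma hasDerivAt_Ccos (C a b D y : ℝ) :
    HasDerivAt (fun t => C * Real.cos (a*(t-b)) * D) (-(C*a*D) * Real.sin (a*(y-b))) y := by
  have h1 : HasDerivAt (fun t : ℝ => a*(t-b)) a y := by
    simpa using ((hasDerivAt_id y).sub_const b).const_mul a
  have h2 := ((Real.hasDerivAt_cos (a*(y-b))).comp y h1).const_mul C
  have h3 := h2.mul_const D
  have heq : -(C*a*D) * Real.sin (a*(y-b)) = C * (-Real.sin (a*(y-b)) * a) * D := by ring
  rw [heq]; exact h3

lemma hasDerivAt_Csin (C a b D y : ℝ) :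
    HasDerivAt (fun t => C * Real.sin (a*(t-b)) * D) ((C*a*D) * Real.cos (a*(y-b))) y := by
  have h1 : HasDerivAt (fun t : ℝ => a*(t-b)) a y := by
    simpa using ((hasDerivAt_id y).sub_const b).const_mul a
  have h2 := ((Real.hasDerivAt_sin (a*(y-b))).comp y h1).const_mul C
  have h3 := h2.mul_const D
  have heq : (C*a*D) * Real.cos (a*(y-b)) = C * (Real.cos (a*(y-b)) * a) * D := by ring
  rw [heq]; exact h3

lemma iteratedDeriv_two_cos (C a b D x : ℝ) :
    iteratedDeriv 2 (fun t => C * Real.cos (a*(t-b)) * D) x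
      = -(a^2) * (C * Real.cos (a*(x-b)) * D) := by
  rw [iteratedDeriv_two']
  have h1 : deriv (fun t => C * Real.cos (a*(t-b)) * D)
      = fun y => (-(C*a*D)) * Real.sin (a*(y-b)) * 1 := by
    funext y
    rw [(hasDerivAt_Ccos C a b D y).deriv]; ring
  rw [h1, (hasDerivAt_Csin (-(C*a*D)) a b 1 x).deriv]
  ring

lemma contDiff_Ccos (C a b D : ℝ) : ContDiff ℝ 2 (fun t => C * Real.cos (a*(t-b)) * D) := by
  apply ContDiff.mul _ contDiff_const
  apply ContDiff.mul contDiff_const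
  exact Real.contDiff_cos.comp (contDiff_const.mul (contDiff_id.sub contDiff_const))

lemma iteratedDeriv_two'' (f : ℝ → ℝ) : iteratedDeriv 2 f = deriv (deriv f) := by
  rw [show (2:ℕ) = 1+1 from rfl, iteratedDeriv_succ, iteratedDeriv_one]

lemma iteratedDeriv_two_sub {f g : ℝ → ℝ} {V : Set ℝ} (hV : IsOpen V) {x : ℝ} (hx : x ∈ V)
    (hf : ContDiffOn ℝ 2 f V) (hg : ContDiff ℝ 2 g) :
    iteratedDeriv 2 (fun t => f t - g t) x = iteratedDeriv 2 f x - iteratedDeriv 2 g x := by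
  have hfd : DifferentiableOn ℝ f V := hf.differentiableOn (by norm_num)
  have hgd : Differentiable ℝ g := hg.differentiable (by norm_num)
  have hEq : deriv (fun t => f t - g t) =ᶠ[𝓝 x] fun y => deriv f y - deriv g y := by
    filter_upwards [hV.mem_nhds hx] with y hy
    exact deriv_sub (hfd.differentiableAt (hV.mem_nhds hy)) (hgd y)
  rw [iteratedDeriv_two'', iteratedDeriv_two'', iteratedDeriv_two'', hEq.deriv_eq]
  have hf1 : DifferentiableAt ℝ (deriv f) x :=
    ((hf.deriv_of_isOpen hV (by norm_num : (1:WithTop ℕ∞)+1 ≤ 2)).differentiableOn (by norm_num)).differentiableAt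
      (hV.mem_nhds hx)
  have hg1 : DifferentiableAt ℝ (deriv g) x := by
    have := (contDiff_succ_iff_deriv.mp (show ContDiff ℝ (1+1) g from hg)).2.2
    exact (this.differentiable (by norm_num)) x
  exact deriv_sub hf1 hg1

lemma second_deriv_test_max {f : ℝ → ℝ} {V : Set ℝ} (hV : IsOpen V) {a : ℝ} (ha : a ∈ V)
    (hf : ContDiffOn ℝ 2 f V) (hmax : IsLocalMax f a) : iteratedDeriv 2 f a ≤ 0 := by
  rw [iteratedDeriv_two'']
  by_contra hpos
  push_neg at hpos
  have hg1 : ContDiffOn ℝ 1 (deriv f) V := hf.deriv_of_isOpen hV (by norm_num : (1:WithTop ℕ∞)+1 ≤ 2)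
  have hgdiff : DifferentiableAt ℝ (deriv f) a :=
    (hg1.differentiableOn (by norm_num)).differentiableAt (hV.mem_nhds ha)
  have hga : deriv f a = 0 := hmax.deriv_eq_zero
  have hslope : Tendsto (slope (deriv f) a) (𝓝[≠] a) (𝓝 (deriv (deriv f) a)) :=
    hasDerivAt_iff_tendsto_slope.mp hgdiff.hasDerivAt
  have h1 : ∀ᶠ x in 𝓝[>] a, 0 < slope (deriv f) a x := by
    have h := hslope.eventually (eventually_gt_nhds hpos)
    exact h.filter_mono (nhdsWithin_mono a (fun x hx => ne_of_gt hx))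
  have h2 : ∀ᶠ x in 𝓝[>] a, 0 < deriv f x := by
    filter_upwards [h1, self_mem_nhdsWithin] with x hx hxa
    have hxa' : (0:ℝ) < x - a := sub_pos.mpr hxa
    have : slope (deriv f) a x = deriv f x / (x - a) := by
      rw [slope_def_field, hga]; ring
    rw [this] at hx
    nlinarith [mul_pos hx hxa', div_mul_cancel₀ (deriv f x) (ne_of_gt hxa')]
  have h3' : ∀ᶠ x in 𝓝 a, x ∈ V := hV.eventually_mem ha
  have h3 : ∀ᶠ x in 𝓝[>] a, x ∈ V := h3'.filter_mono nhdsWithin_le_nhds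
  have h4 : ∀ᶠ x in 𝓝[>] a, f x ≤ f a := hmax.filter_mono nhdsWithin_le_nhds
  obtain ⟨b, hb, hsub⟩ := mem_nhdsGT_iff_exists_Ioo_subset.mp ((h2.and h3).and h4)
  have hab : a < b := hb
  set m := (a + b) / 2 with hm
  have ham : a < m := by simp [hm]; linarith
  have hmb : m < b := by simp [hm]; linarith
  have hIccV : Icc a m ⊆ V := by
    intro x hx
    rcases eq_or_lt_of_le hx.1 with h | h
    · exact h ▸ ha
    · exact (hsub ⟨h, lt_of_le_of_lt hx.2 hmb⟩).1.2
  have hcont : ContinuousOn f (Icc a m) := (hf.continuousOn).mono hIccV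
  have hderiv : ∀ x ∈ interior (Icc a m), 0 < deriv f x := by
    intro x hx
    rw [interior_Icc] at hx
    exact (hsub ⟨hx.1, lt_trans hx.2 hmb⟩).1.1
  have hmono := strictMonoOn_of_deriv_pos (convex_Icc a m) hcont hderiv
  have hlt : f a < f m := hmono (left_mem_Icc.mpr (le_of_lt ham)) (right_mem_Icc.mpr (le_of_lt ham)) ham
  have : f m ≤ f a := (hsub ⟨ham, hmb⟩).2
  linarith

lemma cos_x_bound {p q x : ℝ} (hpq : q - p ≤ 1/8) (hx : x ∈ Set.Icc p q) :
    1/2 ≤ Real.cos (4*π*(x-(p+q)/2)) := by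
  have hd2 : (x-(p+q)/2)^2 ≤ (1/16)^2 := by
    obtain ⟨h1, h2⟩ := hx
    nlinarith
  have hπ := Real.pi_pos
  have hπ' := Real.pi_lt_d2
  have ht2 : (4*π*(x-(p+q)/2))^2 ≤ π^2/16 := by
    have := mul_le_mul_of_nonneg_left hd2 (sq_nonneg π)
    nlinarith
  have hcos := Real.one_sub_sq_div_two_le_cos (x := 4*π*(x-(p+q)/2))
  nlinarith

lemma cos_y_bound {s y : ℝ} (hs : s ≤ 1) (hy : y ∈ Set.Icc 0 s) :
    3/4 ≤ Real.cos ((π/4)*(y - s/2)) := by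
  have hd2 : (y - s/2)^2 ≤ (1/2)^2 := by
    obtain ⟨h1, h2⟩ := hy
    nlinarith
  have hπ := Real.pi_pos
  have hπ' := Real.pi_lt_d2
  have ht2 : ((π/4)*(y - s/2))^2 ≤ π^2/64 := by
    have := mul_le_mul_of_nonneg_left hd2 (sq_nonneg (π/4))
    nlinarith
  have hcos := Real.one_sub_sq_div_two_le_cos (x := (π/4)*(y - s/2))
  nlinarith

set_option maxHeartbeats 2000000 in
lemma key_lemma (p q s μ M : ℝ) (hpq : q - p ≤ 1 / 8) (hs : s ≤ 1)
    (hμ : 0 < μ) (hμ' : μ < π ^ 2 * (16 + 1 / 16)) (hM : 0 < M)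
    (U : Set (ℝ × ℝ)) (hUopen : IsOpen U) (hQU : Set.Icc p q ×ˢ Set.Icc 0 s ⊆ U)
    (u : ℝ × ℝ → ℝ) (hu : ContDiffOn ℝ 2 u U)
    (hPDE : ∀ z ∈ Set.Icc p q ×ˢ Set.Icc 0 s, iteratedDeriv 2 (fun t => u (t, z.2)) z.1
      + iteratedDeriv 2 (fun t => u (z.1, t)) z.2 + μ * u z = 0)
    (hbdry : ∀ z ∈ frontier (Set.Icc p q ×ˢ Set.Icc 0 s), u z ≤ M)
    (hp : p ≤ q) (hs0 : 0 ≤ s) :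
    ∀ z ∈ Set.Icc p q ×ˢ Set.Icc 0 s,
      u z ≤ 8 * M * Real.cos ((π / 4) * (z.2 - s / 2))
        * Real.cos (4 * π * (z.1 - (p + q) / 2)) := by
  set Q : Set (ℝ × ℝ) := Set.Icc p q ×ˢ Set.Icc 0 s with hQdef
  set S : ℝ × ℝ → ℝ := fun z => 8 * M * Real.cos ((π / 4) * (z.2 - s / 2))
    * Real.cos (4 * π * (z.1 - (p + q) / 2)) with hSdef
  show ∀ z ∈ Q, u z ≤ S z
  have hbound : ∀ z ∈ Q, 3 * M ≤ S z ∧ 0 < S z := by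
    intro z hz
    have h1 := cos_y_bound hs hz.2
    have h2 := cos_x_bound hpq hz.1
    have h12 : (3/4 : ℝ) * (1/2) ≤ Real.cos ((π / 4) * (z.2 - s / 2))
        * Real.cos (4 * π * (z.1 - (p + q) / 2)) :=
      mul_le_mul h1 h2 (by norm_num) (by linarith)
    constructor
    · show 3 * M ≤ 8 * M * Real.cos ((π / 4) * (z.2 - s / 2))
        * Real.cos (4 * π * (z.1 - (p + q) / 2))
      nlinarith [h12, hM]
    · show 0 < 8 * M * Real.cos ((π / 4) * (z.2 - s / 2))
        * Real.cos (4 * π * (z.1 - (p + q) / 2))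
      nlinarith [h12, hM]
  have hQcpt : IsCompact Q := isCompact_Icc.prod isCompact_Icc
  have hQclosed : IsClosed Q := isClosed_Icc.prod isClosed_Icc
  have hQne : Q.Nonempty := ⟨(p, 0), ⟨by simp [hp], by simp [hs0]⟩⟩
  have hScont : Continuous S := by
    rw [hSdef]
    apply Continuous.mul
    · exact continuous_const.mul
        (Real.continuous_cos.comp (continuous_const.mul (continuous_snd.sub continuous_const)))
    · exact Real.continuous_cos.comp (continuous_const.mul (continuous_fst.sub continuous_const))
  have hucont : ContinuousOn u Q := hu.continuousOn.mono hQU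
  have hhcont : ContinuousOn (fun z => u z / S z) Q :=
    hucont.div hScont.continuousOn (fun z hz => ne_of_gt (hbound z hz).2)
  obtain ⟨z0, hz0Q, hz0max⟩ := hQcpt.exists_isMaxOn hQne hhcont
  set c := u z0 / S z0 with hcdef
  have hSz0 : 0 < S z0 := (hbound z0 hz0Q).2
  have hmaxQ : ∀ z ∈ Q, u z ≤ c * S z := by
    intro z hz
    have h : u z / S z ≤ c := hz0max hz
    exact (div_le_iff₀ (hbound z hz).2).mp h
  suffices hc : c ≤ 1 by
    intro z hz
    have h1 := hmaxQ z hz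
    have h2 := (hbound z hz).2
    nlinarith
  by_contra hcc
  push_neg at hcc
  have hz0notfr : z0 ∉ frontier Q := by
    intro hfr
    have h1 : u z0 ≤ M := hbdry z0 hfr
    have h3 : 3 * M ≤ S z0 := (hbound z0 hz0Q).1
    have : c ≤ 1 := by
      rw [hcdef, div_le_one hSz0]; linarith
    linarith
  have hz0int : z0 ∈ interior Q := by
    by_contra h
    exact hz0notfr ⟨subset_closure hz0Q, h⟩
  have huz0 : u z0 = c * S z0 := by
    rw [hcdef]; field_simp
  have hcpos : 0 < c := lt_trans one_pos hcc
  have hcS : 0 < c * S z0 := mul_pos hcpos hSz0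
  -- x-direction
  have hline : ∀ (b₁ b₂ : ℝ × ℝ → ℝ → ℝ × ℝ), True := fun _ _ => trivial
  set Cx := c * (8 * M * Real.cos ((π / 4) * (z0.2 - s / 2))) with hCx
  have hfxS : ∀ t : ℝ, Cx * Real.cos ((4 * π) * (t - (p + q) / 2)) * 1 = c * S (t, z0.2) := by
    intro t; rw [hSdef, hCx]; ring
  set fx : ℝ → ℝ := fun t => u (t, z0.2) - Cx * Real.cos ((4 * π) * (t - (p + q) / 2)) * 1
    with hfx
  set Vx : Set ℝ := {t : ℝ | (t, z0.2) ∈ interior Q} with hVx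
  have hVxopen : IsOpen Vx :=
    isOpen_interior.preimage (continuous_id.prodMk continuous_const)
  have hVx0 : z0.1 ∈ Vx := by
    simp only [hVx, Set.mem_setOf_eq, Prod.mk.eta]
    exact hz0int
  have hineru : ContDiffOn ℝ 2 (fun t => u (t, z0.2)) Vx := by
    have hemb : ContDiff ℝ 2 (fun t : ℝ => (t, z0.2)) := contDiff_id.prodMk contDiff_const
    exact hu.comp hemb.contDiffOn (fun t ht => hQU (interior_subset ht))
  have hfxC : ContDiffOn ℝ 2 fx Vx :=
    hineru.sub (contDiff_Ccos Cx (4 * π) ((p + q) / 2) 1).contDiffOn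
  have hfx0 : fx z0.1 = 0 := by
    rw [hfx]
    simp only
    rw [hfxS z0.1, Prod.mk.eta, ← huz0]
    ring
  have hfxmax : IsLocalMax fx z0.1 := by
    filter_upwards [hVxopen.mem_nhds hVx0] with t ht
    have htQ : (t, z0.2) ∈ Q := interior_subset ht
    have h1 : u (t, z0.2) ≤ c * S (t, z0.2) := hmaxQ _ htQ
    rw [hfx0, hfx]
    simp only
    rw [hfxS t]
    linarith
  have hDx := second_deriv_test_max hVxopen hVx0 hfxC hfxmax
  have hsplitx := iteratedDeriv_two_sub hVxopen hVx0 hineru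
    (contDiff_Ccos Cx (4 * π) ((p + q) / 2) 1)
  have hcosx := iteratedDeriv_two_cos Cx (4 * π) ((p + q) / 2) 1 z0.1
  have hxineq : iteratedDeriv 2 (fun t => u (t, z0.2)) z0.1 + (4 * π) ^ 2 * (c * S z0) ≤ 0 := by
    rw [hfx] at hDx
    rw [hsplitx, hcosx] at hDx
    have := hfxS z0.1
    rw [Prod.mk.eta] at this
    nlinarith [hDx]
  -- y-direction
  set Cy := c * (8 * M) with hCy
  set Dy := Real.cos (4 * π * (z0.1 - (p + q) / 2)) with hDy
  have hfyS : ∀ t : ℝ, Cy * Real.cos ((π / 4) * (t - s / 2)) * Dy = c * S (z0.1, t) := by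
    intro t; rw [hSdef, hCy, hDy]; ring
  set fy : ℝ → ℝ := fun t => u (z0.1, t) - Cy * Real.cos ((π / 4) * (t - s / 2)) * Dy with hfy
  set Vy : Set ℝ := {t : ℝ | (z0.1, t) ∈ interior Q} with hVy
  have hVyopen : IsOpen Vy :=
    isOpen_interior.preimage (continuous_const.prodMk continuous_id)
  have hVy0 : z0.2 ∈ Vy := by
    simp only [hVy, Set.mem_setOf_eq, Prod.mk.eta]
    exact hz0int
  have hinerv : ContDiffOn ℝ 2 (fun t => u (z0.1, t)) Vy := by
    have hemb : ContDiff ℝ 2 (fun t : ℝ => (z0.1, t)) := contDiff_const.prodMk contDiff_id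
    exact hu.comp hemb.contDiffOn (fun t ht => hQU (interior_subset ht))
  have hfyC : ContDiffOn ℝ 2 fy Vy :=
    hinerv.sub (contDiff_Ccos Cy (π / 4) (s / 2) Dy).contDiffOn
  have hfy0 : fy z0.2 = 0 := by
    rw [hfy]
    simp only
    rw [hfyS z0.2, Prod.mk.eta, ← huz0]
    ring
  have hfymax : IsLocalMax fy z0.2 := by
    filter_upwards [hVyopen.mem_nhds hVy0] with t ht
    have htQ : (z0.1, t) ∈ Q := interior_subset ht
    have h1 : u (z0.1, t) ≤ c * S (z0.1, t) := hmaxQ _ htQ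
    rw [hfy0, hfy]
    simp only
    rw [hfyS t]
    linarith
  have hDyy := second_deriv_test_max hVyopen hVy0 hfyC hfymax
  have hsplity := iteratedDeriv_two_sub hVyopen hVy0 hinerv
    (contDiff_Ccos Cy (π / 4) (s / 2) Dy)
  have hcosy := iteratedDeriv_two_cos Cy (π / 4) (s / 2) Dy z0.2
  have hyineq : iteratedDeriv 2 (fun t => u (z0.1, t)) z0.2 + (π / 4) ^ 2 * (c * S z0) ≤ 0 := by
    rw [hfy] at hDyy
    rw [hsplity, hcosy] at hDyy
    have := hfyS z0.2
    rw [Prod.mk.eta] at this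
    nlinarith [hDyy]
  have hpde := hPDE z0 hz0Q
  rw [huz0] at hpde
  nlinarith [hxineq, hyineq, hpde, hcS, hμ', hμ]

/-- Comparison-function / maximum-principle estimate: a solution of (Δ+μ)u = 0
on a thin rectangle Q with |u| ≤ M on ∂Q satisfies |u| ≤ 8M on Q, provided the
comparison function S is positive on Q. -/
theorem stmt_17 (p q s μ M : ℝ) (hpq : q - p ≤ 1 / 8) (hs : s ≤ 1)
    (hμ : 0 < μ) (hμ' : μ < π ^ 2 * (16 + 1 / 16))
    (Q : Set (ℝ × ℝ)) (hQ : Q = Set.Icc p q ×ˢ Set.Icc 0 s)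
    (u : ℝ × ℝ → ℝ)
    (hreg : ∃ U : Set (ℝ × ℝ), IsOpen U ∧ Q ⊆ U ∧ ContDiffOn ℝ 2 u U)
    (hPDE : ∀ z ∈ Q, iteratedDeriv 2 (fun t => u (t, z.2)) z.1
      + iteratedDeriv 2 (fun t => u (z.1, t)) z.2 + μ * u z = 0)
    (hbdry : ∀ z ∈ frontier Q, |u z| ≤ M)
    (S : ℝ × ℝ → ℝ)
    (hS : ∀ z : ℝ × ℝ, S z = 8 * M * Real.cos ((π / 4) * (z.2 - s / 2))
      * Real.cos (4 * π * (z.1 - (p + q) / 2)))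
    (hSpos : ∀ z ∈ Q, 0 < S z) :
    ∀ z ∈ Q, |u z| ≤ 8 * M := by
  obtain ⟨U, hUopen, hQU, hu⟩ := hreg
  subst hQ
  intro z hz
  have hz1 : z.1 ∈ Set.Icc p q := hz.1
  have hz2 : z.2 ∈ Set.Icc 0 s := hz.2
  have hp : p ≤ q := le_trans hz1.1 hz1.2
  have hs0 : 0 ≤ s := le_trans hz2.1 hz2.2
  have h1 := cos_y_bound hs hz2
  have h2 := cos_x_bound hpq hz1
  have hM : 0 < M := by
    have hSz := hSpos z hz
    rw [hS z] at hSz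
    nlinarith [h1, h2, hSz, mul_le_mul h1 h2 (by norm_num) (by linarith : (0:ℝ) ≤ Real.cos ((π / 4) * (z.2 - s / 2)))]
  have hbd1 : ∀ w ∈ frontier (Set.Icc p q ×ˢ Set.Icc 0 s), u w ≤ M :=
    fun w hw => (abs_le.mp (hbdry w hw)).2
  have hbd2 : ∀ w ∈ frontier (Set.Icc p q ×ˢ Set.Icc 0 s), (fun w => -u w) w ≤ M :=
    fun w hw => by
      have := (abs_le.mp (hbdry w hw)).1
      simp only
      linarith
  have hpde2 : ∀ w ∈ Set.Icc p q ×ˢ Set.Icc 0 s,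
      iteratedDeriv 2 (fun t => (fun w => -u w) (t, w.2)) w.1
        + iteratedDeriv 2 (fun t => (fun w => -u w) (w.1, t)) w.2
        + μ * (fun w => -u w) w = 0 := by
    intro w hw
    have h := hPDE w hw
    simp only [iteratedDeriv_neg, iteratedDeriv_fun_neg]
    linarith
  have hub := key_lemma p q s μ M hpq hs hμ hμ' hM U hUopen hQU u hu hPDE hbd1 hp hs0 z hz
  have hlb := key_lemma p q s μ M hpq hs hμ hμ' hM U hUopen hQU (fun w => -u w) hu.neg
    hpde2 hbd2 hp hs0 z hz
  have hcos1 : Real.cos ((π / 4) * (z.2 - s / 2)) ≤ 1 := Real.cos_le_one _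
  have hcos2 : Real.cos (4 * π * (z.1 - (p + q) / 2)) ≤ 1 := Real.cos_le_one _
  have hSle : 8 * M * Real.cos ((π / 4) * (z.2 - s / 2))
      * Real.cos (4 * π * (z.1 - (p + q) / 2)) ≤ 8 * M := by
    nlinarith [mul_le_mul hcos1 hcos2 (by linarith) (by norm_num : (0:ℝ) ≤ 1), hM]
  rw [abs_le]
  constructor
  · linarith
  · linarith
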